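/- Let P: U × Res_{E/Q_p}G_m → GU be the multiplication map (u, z) ↦ uz for an odd unitary similitude group GU over Q_p, which is surjective on Q_p-points with kernel U(1). For (γ, z) ∈ (U × Res_{E/Q_p}G_m)(Q_p), the map P induces a bijection between conjugacy classes in (U × Res G_m)(Q_p) that are stably conjugate to (γ, z) and conjugacy classes in GU(Q_p) that are stably conjugate to γz. -/
import Mathlib



private lemma conj_mul_central_aux {G : Type*} [Group G] {a b : G} (d : G)
    (hd : ∀ x : G, d * x = x * d) (h : IsConj a b) : IsConj (a * d) (b * d) := by
  obtain ⟨x, hx⟩ := isConj_iff.mp h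
  refine isConj_iff.mpr ⟨x, ?_⟩
  calc x * (a * d) * x⁻¹ = x * a * (d * x⁻¹) := by group
    _ = x * a * (x⁻¹ * d) := by rw [hd x⁻¹]
    _ = (x * a * x⁻¹) * d := by group
    _ = b * d := by rw [hx]

private lemma conj_decomp_aux {G : Type*} [Group G] (A B C D d : G)
    (hB : ∀ x : G, B * x = x * B) (hd : ∀ x : G, d * x = x * d)
    (h : (A * B) * (C * d) * (A * B)⁻¹ = D * d) : A * C * A⁻¹ = D := by
  have key : (A * B) * (C * d) * (A * B)⁻¹ = (A * C * A⁻¹) * d := by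
    rw [mul_inv_rev]
    calc (A * B) * (C * d) * (B⁻¹ * A⁻¹)
        = A * ((B * C) * ((d * B⁻¹) * A⁻¹)) := by group
      _ = A * ((C * B) * ((B⁻¹ * d) * A⁻¹)) := by rw [hB C, hd B⁻¹]
      _ = A * C * (d * A⁻¹) := by group
      _ = A * C * (A⁻¹ * d) := by rw [hd A⁻¹]
      _ = (A * C * A⁻¹) * d := by group
  exact mul_right_cancel (key ▸ h)

/-- Let `P : U × Res_{E/ℚ_p}𝔾_m → GU`, `(u,z) ↦ uz`, for an odd
unitary similitude group; it is surjective on points, `Z = Res 𝔾_m` is central,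
`U` is the kernel of the similitude character `c`, and everything admits
compatible "points over the algebraic closure" (the groups `Ub, Zb, GUb` with
stable conjugacy meaning conjugacy of images there).  Then `P` induces a
bijection between conjugacy classes in `(U × Z)(ℚ_p)` stably conjugate to
`(γ, z)` and conjugacy classes in `GU(ℚ_p)` stably conjugate to `γz`:
(1) `P` sends stable classes to stable classes; (2) every class stably conjugate
to `P(γ,z)` is hit; (3) `P` is injective on such conjugacy classes. -/
theorem stable_classes_bijection_U_times_Gm_to_GU
    (U Z GU Ub Zb GUb A Ab : Type*)
    [Group U] [CommGroup Z] [Group GU] [Group Ub] [CommGroup Zb] [Group GUb]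
    [CommGroup A] [CommGroup Ab]
    (eU : U →* GU) (eZ : Z →* GU)
    (eUb : Ub →* GUb) (eZb : Zb →* GUb)
    (heU : Function.Injective eU) (heUb : Function.Injective eUb)
    (hZcent : ∀ (z : Z) (g : GU), eZ z * g = g * eZ z)
    (hZbcent : ∀ (z : Zb) (g : GUb), eZb z * g = g * eZb z)
    (ιU : U →* Ub) (ιZ : Z →* Zb) (ιG : GU →* GUb)
    (hιZ : Function.Injective ιZ) (hιG : Function.Injective ιG)
    (hcompU : ∀ u, ιG (eU u) = eUb (ιU u))
    (hcompZ : ∀ z, ιG (eZ z) = eZb (ιZ z))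
    (c : GU →* A) (cb : GUb →* Ab) (ιA : A →* Ab)
    (hιA : Function.Injective ιA)
    (hccompat : ∀ g, cb (ιG g) = ιA (c g))
    (hkerU : ∀ g : GU, c g = 1 → ∃ u, eU u = g)
    (hcU : ∀ u, c (eU u) = 1)
    (hkerUb : ∀ g : GUb, cb g = 1 → ∃ u, eUb u = g)
    (hcUb : ∀ u, cb (eUb u) = 1)
    (hsurj : ∀ g : GU, ∃ u z, g = eU u * eZ z)
    (hsurjb : ∀ g : GUb, ∃ u z, g = eUb u * eZb z)
    (γ : U) (z : Z) :
    (∀ q : U × Z,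
        IsConj ((ιU q.1, ιZ q.2) : Ub × Zb) (ιU γ, ιZ z) →
        IsConj (ιG (eU q.1 * eZ q.2)) (ιG (eU γ * eZ z))) ∧
    (∀ g : GU, IsConj (ιG g) (ιG (eU γ * eZ z)) →
        ∃ q : U × Z, IsConj ((ιU q.1, ιZ q.2) : Ub × Zb) (ιU γ, ιZ z) ∧
          IsConj (eU q.1 * eZ q.2) g) ∧
    (∀ q q' : U × Z,
        IsConj ((ιU q.1, ιZ q.2) : Ub × Zb) (ιU γ, ιZ z) →
        IsConj ((ιU q'.1, ιZ q'.2) : Ub × Zb) (ιU γ, ιZ z) →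
        IsConj (eU q.1 * eZ q.2) (eU q'.1 * eZ q'.2) →
        IsConj q q') := by
  refine ⟨?_, ?_, ?_⟩
  · rintro ⟨u', z'⟩ hconj
    have hz : z = z' := hιZ.eq_iff.mp (Eq.symm <| isConj_iff_eq.mp ((MonoidHom.snd Ub Zb).map_isConj hconj))
    subst hz
    have h1 : IsConj (ιU u') (ιU γ) := (MonoidHom.fst Ub Zb).map_isConj hconj
    have h2 : IsConj (eUb (ιU u')) (eUb (ιU γ)) := eUb.map_isConj h1
    have h3 := conj_mul_central_aux (eZb (ιZ z)) (fun x => hZbcent _ x) h2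
    simpa [map_mul, hcompU, hcompZ] using h3
  · intro g hg
    obtain ⟨u, w, hguw⟩ := hsurj g
    have hcw : c (eZ w) = c (eZ z) := by
      have habs : cb (ιG g) = cb (ιG (eU γ * eZ z)) :=
        isConj_iff_eq.mp (cb.map_isConj hg)
      rw [hccompat, hccompat] at habs
      have := hιA habs
      rw [hguw, map_mul, map_mul, hcU, hcU, one_mul, one_mul] at this
      exact this
    have hker : c (eZ (w * z⁻¹)) = 1 := by
      rw [map_mul, map_mul, hcw, map_inv, map_inv, mul_inv_cancel]
    obtain ⟨v, hv⟩ := hkerU _ hker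
    have hgeq : g = eU (u * v) * eZ z := by
      rw [hguw, map_mul]
      have : eZ w = eU v * eZ z := by
        rw [hv, map_mul, map_inv, mul_assoc, inv_mul_cancel, mul_one]
      rw [this, mul_assoc]
    obtain ⟨x, hx⟩ := isConj_iff.mp hg
    obtain ⟨a, b, hab⟩ := hsurjb x
    have hxg : (eUb a * eZb b) * (eUb (ιU (u * v)) * eZb (ιZ z)) * (eUb a * eZb b)⁻¹
        = eUb (ιU γ) * eZb (ιZ z) := by
      rw [← hab]
      have hL : ιG g = eUb (ιU (u * v)) * eZb (ιZ z) := by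
        rw [hgeq, map_mul, hcompU, hcompZ]
      have hR : ιG (eU γ * eZ z) = eUb (ιU γ) * eZb (ιZ z) := by
        rw [map_mul, hcompU, hcompZ]
      rw [← hL, ← hR]; exact hx
    have hkey : eUb a * eUb (ιU (u * v)) * (eUb a)⁻¹ = eUb (ιU γ) :=
      conj_decomp_aux _ _ _ _ _ (fun x => hZbcent _ x) (fun x => hZbcent _ x) hxg
    have hconjU : a * ιU (u * v) * a⁻¹ = ιU γ := by
      apply heUb
      rw [map_mul, map_mul, map_inv]
      exact hkey
    refine ⟨(u * v, z), ?_, ?_⟩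
    · refine isConj_iff.mpr ⟨(a, 1), ?_⟩
      refine Prod.ext ?_ ?_
      · simpa using hconjU
      · simp
    · exact hgeq ▸ IsConj.refl _
  · rintro ⟨u1, z1⟩ ⟨u2, z2⟩ h1 h2 h3
    have hz1 : z = z1 := hιZ.eq_iff.mp (Eq.symm <| isConj_iff_eq.mp ((MonoidHom.snd Ub Zb).map_isConj h1))
    have hz2 : z = z2 := hιZ.eq_iff.mp (Eq.symm <| isConj_iff_eq.mp ((MonoidHom.snd Ub Zb).map_isConj h2))
    subst hz1; subst hz2
    obtain ⟨x, hx⟩ := isConj_iff.mp h3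
    obtain ⟨a, b, hab⟩ := hsurj x
    have hxg : (eU a * eZ b) * (eU u1 * eZ z) * (eU a * eZ b)⁻¹ = eU u2 * eZ z := by
      rw [← hab]; exact hx
    have hkey : eU a * eU u1 * (eU a)⁻¹ = eU u2 :=
      conj_decomp_aux _ _ _ _ _ (fun x => hZcent _ x) (fun x => hZcent _ x) hxg
    have hconjU : a * u1 * a⁻¹ = u2 := by
      apply heU
      rw [map_mul, map_mul, map_inv]
      exact hkey
    refine isConj_iff.mpr ⟨(a, 1), ?_⟩
    refine Prod.ext ?_ ?_
    · simpa using hconjU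
    · simp
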